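/- Assign degrees deg u_i = i + 2 for all i ≥ 0. Then the polynomial m_d(u0,...,u_{2d}) defined by the KdV generating relation is homogeneous of degree 2d + 2, for every d ≥ 0. -/

import Mathlib

open Nat Finset MvPolynomial

private lemma iswh_pow {w : ℕ → ℕ} {p : MvPolynomial ℕ ℚ} {m : ℕ}
    (h : p.IsWeightedHomogeneous w m) : ∀ n : ℕ, (p ^ n).IsWeightedHomogeneous w (n * m)
  | 0 => by simpa using isWeightedHomogeneous_one ℚ w
  | n + 1 => by
      rw [pow_succ, Nat.succ_mul]
      exact (iswh_pow h n).mul h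

private lemma mul_mem_wh {w : ℕ → ℕ} {p q : MvPolynomial ℕ ℚ} {m n : ℕ}
    (hp : p ∈ weightedHomogeneousSubmodule ℚ w m)
    (hq : q ∈ weightedHomogeneousSubmodule ℚ w n) :
    p * q ∈ weightedHomogeneousSubmodule ℚ w (m + n) := by
  rw [mem_weightedHomogeneousSubmodule] at *
  exact hp.mul hq

private lemma D_monomial_mem (D : Derivation ℚ (MvPolynomial ℕ ℚ) (MvPolynomial ℕ ℚ))
    (hD : ∀ i : ℕ, D (MvPolynomial.X i) = MvPolynomial.X (i + 1)) (s : ℕ →₀ ℕ) :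
    ∀ c : ℚ, D (monomial s c) ∈
      weightedHomogeneousSubmodule ℚ (fun i : ℕ => i + 2)
        (Finsupp.weight (fun i : ℕ => i + 2) s + 1) := by
  induction s using Finsupp.induction with
  | zero =>
      intro c
      rw [monomial_zero', ← MvPolynomial.algebraMap_eq, D.map_algebraMap]
      exact Submodule.zero_mem _
  | single_add a n f hfa hn ih =>
      intro c
      obtain ⟨t, rfl⟩ := Nat.exists_eq_succ_of_ne_zero hn
      have hm : (monomial (Finsupp.single a (t + 1) + f) c : MvPolynomial ℕ ℚ)
          = MvPolynomial.X a ^ (t + 1) * monomial f c := by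
        rw [X_pow_eq_monomial, monomial_mul, one_mul]
      have hw : Finsupp.weight (fun i : ℕ => i + 2) (Finsupp.single a (t + 1) + f)
          = (t + 1) * (a + 2) + Finsupp.weight (fun i : ℕ => i + 2) f := by
        rw [map_add]
        congr 1
        rw [Finsupp.weight_apply, Finsupp.sum_single_index] <;> simp [mul_comm]
      rw [hm, D.leibniz, Derivation.leibniz_pow, hD, hw]
      have h1 : MvPolynomial.X a ^ (t + 1) * D (monomial f c) ∈
          weightedHomogeneousSubmodule ℚ (fun i : ℕ => i + 2)
            ((t + 1) * (a + 2) + (Finsupp.weight (fun i : ℕ => i + 2) f + 1)) :=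
        mul_mem_wh (by
          rw [mem_weightedHomogeneousSubmodule, show (t + 1) * (a + 2) = (t + 1) * ((fun i : ℕ => i + 2) a) from rfl]
          exact iswh_pow (isWeightedHomogeneous_X ℚ _ a) (t + 1)) (ih c)
      have h2 : (monomial f c : MvPolynomial ℕ ℚ) *
          ((t + 1) • (MvPolynomial.X a ^ (t + 1 - 1) * MvPolynomial.X (a + 1))) ∈
          weightedHomogeneousSubmodule ℚ (fun i : ℕ => i + 2)
            (Finsupp.weight (fun i : ℕ => i + 2) f + (t * (a + 2) + (a + 1 + 2))) := by
      -- simplify t+1-1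
        refine mul_mem_wh ?_ (nsmul_mem ?_ _)
        · rw [mem_weightedHomogeneousSubmodule]
          exact isWeightedHomogeneous_monomial _ _ _ rfl
        · simp only [Nat.add_sub_cancel]
          exact mul_mem_wh (by
            rw [mem_weightedHomogeneousSubmodule, show t * (a + 2) = t * ((fun i : ℕ => i + 2) a) from rfl]
            exact iswh_pow (isWeightedHomogeneous_X ℚ _ a) t)
            (by rw [mem_weightedHomogeneousSubmodule]; exact isWeightedHomogeneous_X ℚ _ (a + 1))
      have e1 : (t + 1) * (a + 2) + (Finsupp.weight (fun i : ℕ => i + 2) f + 1)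
          = (t + 1) * (a + 2) + Finsupp.weight (fun i : ℕ => i + 2) f + 1 := by ring
      have e2 : Finsupp.weight (fun i : ℕ => i + 2) f + (t * (a + 2) + (a + 1 + 2))
          = (t + 1) * (a + 2) + Finsupp.weight (fun i : ℕ => i + 2) f + 1 := by ring
      rw [e1] at h1
      rw [e2] at h2
      simpa [smul_eq_mul, mul_assoc, mul_comm, mul_left_comm] using add_mem h1 h2

private lemma D_mem_wh (D : Derivation ℚ (MvPolynomial ℕ ℚ) (MvPolynomial ℕ ℚ))
    (hD : ∀ i : ℕ, D (MvPolynomial.X i) = MvPolynomial.X (i + 1))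
    {p : MvPolynomial ℕ ℚ} {n : ℕ}
    (hp : p ∈ weightedHomogeneousSubmodule ℚ (fun i : ℕ => i + 2) n) :
    D p ∈ weightedHomogeneousSubmodule ℚ (fun i : ℕ => i + 2) (n + 1) := by
  rw [mem_weightedHomogeneousSubmodule] at hp
  rw [show p = ∑ s ∈ p.support, monomial s (coeff s p) from (support_sum_monomial_coeff p).symm,
    map_sum]
  refine Submodule.sum_mem _ fun s hs => ?_
  have hws : Finsupp.weight (fun i : ℕ => i + 2) s = n := hp (mem_support_iff.1 hs)
  have := D_monomial_mem D hD s (coeff s p)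
  rwa [hws] at this

private lemma C_mul_mem_wh (c : ℚ) {p : MvPolynomial ℕ ℚ} {w : ℕ → ℕ} {n : ℕ}
    (hp : p ∈ weightedHomogeneousSubmodule ℚ w n) :
    MvPolynomial.C c * p ∈ weightedHomogeneousSubmodule ℚ w n := by
  rw [← smul_eq_C_mul]
  exact Submodule.smul_mem _ _ hp

/-- With the degree assignment `deg u_i = i + 2`, each Gelfand–Dickey density `m_d`
(defined by the KdV generating relation, encoded coefficientwise in `1/λ` with
`b_0 = 1`, `b_{d+1} = (2d+1)!! m_d` and the derivation `∂(u_i) = u_{i+1}`) is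
weighted homogeneous of degree `2d + 2`. -/
theorem gelfand_dickey_densities_weighted_homogeneous
    (D : Derivation ℚ (MvPolynomial ℕ ℚ) (MvPolynomial ℕ ℚ))
    (hD : ∀ i : ℕ, D (MvPolynomial.X i) = MvPolynomial.X (i + 1))
    (m b : ℕ → MvPolynomial ℕ ℚ)
    (hb0 : b 0 = 1)
    (hbk : ∀ d : ℕ, b (d + 1) = MvPolynomial.C (((2 * d + 1)‼ : ℕ) : ℚ) * m d)
    (hrel : ∀ k : ℕ,
      (∑ i ∈ Finset.range (k + 1), b i * D (D (b (k - i))))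
        - MvPolynomial.C (1 / 2 : ℚ) * (∑ i ∈ Finset.range (k + 1), D (b i) * D (b (k - i)))
        - 2 * (∑ i ∈ Finset.range (k + 2), b i * b (k + 1 - i))
        + 4 * MvPolynomial.X 0 * (∑ i ∈ Finset.range (k + 1), b i * b (k - i)) = 0) :
    ∀ d : ℕ, MvPolynomial.IsWeightedHomogeneous (fun i : ℕ => i + 2) (m d) (2 * d + 2) := by
  have hbh : ∀ k : ℕ, b k ∈ weightedHomogeneousSubmodule ℚ (fun i : ℕ => i + 2) (2 * k) := by
    intro k
    induction k using Nat.strong_induction_on with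
    | _ k ih =>
      match k with
      | 0 =>
          rw [hb0, mem_weightedHomogeneousSubmodule]
          simpa using isWeightedHomogeneous_one ℚ (fun i : ℕ => i + 2)
      | k + 1 =>
          have hS2 : (∑ i ∈ Finset.range (k + 2), b i * b (k + 1 - i))
              = 2 * b (k + 1) + ∑ i ∈ Finset.range k, b (i + 1) * b (k - i) := by
            rw [Finset.sum_range_succ']
            simp only [Nat.add_sub_add_right, Nat.sub_zero]
            rw [Finset.sum_range_succ, Nat.sub_self, hb0]
            ring
          have h4 : 4 * b (k + 1) =
              (∑ i ∈ Finset.range (k + 1), b i * D (D (b (k - i))))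
              - MvPolynomial.C (1 / 2 : ℚ) * (∑ i ∈ Finset.range (k + 1), D (b i) * D (b (k - i)))
              - 2 * (∑ i ∈ Finset.range k, b (i + 1) * b (k - i))
              + 4 * MvPolynomial.X 0 * (∑ i ∈ Finset.range (k + 1), b i * b (k - i)) := by
            linear_combination - hrel k - 2 * hS2
          have m1 : (∑ i ∈ Finset.range (k + 1), b i * D (D (b (k - i)))) ∈
              weightedHomogeneousSubmodule ℚ (fun i : ℕ => i + 2) (2 * (k + 1)) := by
            refine Submodule.sum_mem _ fun i hi => ?_
            have hi' : i < k + 1 := Finset.mem_range.1 hi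
            have h := mul_mem_wh (ih i (by omega))
              (D_mem_wh D hD (D_mem_wh D hD (ih (k - i) (by omega))))
            rwa [show 2 * i + (2 * (k - i) + 1 + 1) = 2 * (k + 1) from by omega] at h
          have m2 : (∑ i ∈ Finset.range (k + 1), D (b i) * D (b (k - i))) ∈
              weightedHomogeneousSubmodule ℚ (fun i : ℕ => i + 2) (2 * (k + 1)) := by
            refine Submodule.sum_mem _ fun i hi => ?_
            have hi' : i < k + 1 := Finset.mem_range.1 hi
            have h := mul_mem_wh (D_mem_wh D hD (ih i (by omega)))
              (D_mem_wh D hD (ih (k - i) (by omega)))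
            rwa [show 2 * i + 1 + (2 * (k - i) + 1) = 2 * (k + 1) from by omega] at h
          have m3 : (∑ i ∈ Finset.range k, b (i + 1) * b (k - i)) ∈
              weightedHomogeneousSubmodule ℚ (fun i : ℕ => i + 2) (2 * (k + 1)) := by
            refine Submodule.sum_mem _ fun i hi => ?_
            have hi' : i < k := Finset.mem_range.1 hi
            have h := mul_mem_wh (ih (i + 1) (by omega)) (ih (k - i) (by omega))
            rwa [show 2 * (i + 1) + 2 * (k - i) = 2 * (k + 1) from by omega] at h
          have m4 : MvPolynomial.X 0 * (∑ i ∈ Finset.range (k + 1), b i * b (k - i)) ∈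
              weightedHomogeneousSubmodule ℚ (fun i : ℕ => i + 2) (2 * (k + 1)) := by
            have hsum : (∑ i ∈ Finset.range (k + 1), b i * b (k - i)) ∈
                weightedHomogeneousSubmodule ℚ (fun i : ℕ => i + 2) (2 * k) := by
              refine Submodule.sum_mem _ fun i hi => ?_
              have hi' : i < k + 1 := Finset.mem_range.1 hi
              have h := mul_mem_wh (ih i (by omega)) (ih (k - i) (by omega))
              rwa [show 2 * i + 2 * (k - i) = 2 * k from by omega] at h
            have hx : (MvPolynomial.X 0 : MvPolynomial ℕ ℚ) ∈
                weightedHomogeneousSubmodule ℚ (fun i : ℕ => i + 2) 2 := by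
              rw [mem_weightedHomogeneousSubmodule]
              exact isWeightedHomogeneous_X ℚ _ 0
            have h := mul_mem_wh hx hsum
            rwa [show 2 + 2 * k = 2 * (k + 1) from by omega] at h
          have hA : ((∑ i ∈ Finset.range (k + 1), b i * D (D (b (k - i))))
              - MvPolynomial.C (1 / 2 : ℚ) * (∑ i ∈ Finset.range (k + 1), D (b i) * D (b (k - i)))
              - 2 * (∑ i ∈ Finset.range k, b (i + 1) * b (k - i))
              + 4 * MvPolynomial.X 0 * (∑ i ∈ Finset.range (k + 1), b i * b (k - i))) ∈
              weightedHomogeneousSubmodule ℚ (fun i : ℕ => i + 2) (2 * (k + 1)) := by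
            have h2 : (2 : MvPolynomial ℕ ℚ) * (∑ i ∈ Finset.range k, b (i + 1) * b (k - i))
                = (∑ i ∈ Finset.range k, b (i + 1) * b (k - i))
                  + (∑ i ∈ Finset.range k, b (i + 1) * b (k - i)) := two_mul _
            have h4x : (4 : MvPolynomial ℕ ℚ) * MvPolynomial.X 0 *
                (∑ i ∈ Finset.range (k + 1), b i * b (k - i))
                = MvPolynomial.X 0 * (∑ i ∈ Finset.range (k + 1), b i * b (k - i))
                + MvPolynomial.X 0 * (∑ i ∈ Finset.range (k + 1), b i * b (k - i))
                + MvPolynomial.X 0 * (∑ i ∈ Finset.range (k + 1), b i * b (k - i))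
                + MvPolynomial.X 0 * (∑ i ∈ Finset.range (k + 1), b i * b (k - i)) := by ring
            rw [h2, h4x]
            exact add_mem (sub_mem (sub_mem m1 (C_mul_mem_wh _ m2)) (add_mem m3 m3))
              (add_mem (add_mem (add_mem m4 m4) m4) m4)
          have hc : (MvPolynomial.C (1 / 4 : ℚ) : MvPolynomial ℕ ℚ) * 4 = 1 := by
            rw [show (4 : MvPolynomial ℕ ℚ) = MvPolynomial.C (4 : ℚ) from
              (map_ofNat MvPolynomial.C 4).symm, ← map_mul]
            norm_num
          have hb1 : b (k + 1) = MvPolynomial.C (1 / 4 : ℚ) *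
              ((∑ i ∈ Finset.range (k + 1), b i * D (D (b (k - i))))
              - MvPolynomial.C (1 / 2 : ℚ) * (∑ i ∈ Finset.range (k + 1), D (b i) * D (b (k - i)))
              - 2 * (∑ i ∈ Finset.range k, b (i + 1) * b (k - i))
              + 4 * MvPolynomial.X 0 * (∑ i ∈ Finset.range (k + 1), b i * b (k - i))) := by
            linear_combination MvPolynomial.C (1 / 4 : ℚ) * h4 - b (k + 1) * hc
          rw [hb1]
          exact C_mul_mem_wh _ hA
  intro d
  have hc0 : (((2 * d + 1)‼ : ℕ) : ℚ) ≠ 0 :=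
    Nat.cast_ne_zero.2 (Nat.doubleFactorial_pos _).ne'
  have hm : m d = MvPolynomial.C ((((2 * d + 1)‼ : ℕ) : ℚ)⁻¹) * b (d + 1) := by
    rw [hbk d, ← mul_assoc, ← map_mul, inv_mul_cancel₀ hc0, map_one, one_mul]
  rw [show 2 * d + 2 = 2 * (d + 1) from by ring, ← mem_weightedHomogeneousSubmodule, hm]
  exact C_mul_mem_wh _ (hbh (d + 1))
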